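/- Let N_t ≥ 1 be an integer, let D be a 2N_t × 2N_t real diagonal matrix with positive diagonal entries, and let a ∈ ℤ^{2N_t} be a fixed integer vector. Let V_c be a random N_t × N_t unitary matrix distributed according to the Haar probability measure on the unitary group U(N_t), and let V = [[Re V_c, −Im V_c],[Im V_c, Re V_c]] be the induced 2N_t × 2N_t real orthogonal matrix. Let O be a random 2N_t × 2N_t real orthogonal matrix distributed according to the Haar probability measure on the orthogonal group O(2N_t). Then the random variables ‖D^{1/2} V a‖ and ‖D^{1/2} O a‖ are equal in distribution, i.e., the pushforward of the Haar measure on U(N_t) under V_c ↦ ‖D^{1/2} V a‖ equals the pushforward of the Haar measure on O(2N_t) under O ↦ ‖D^{1/2} O a‖. -/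

import Mathlib

open MeasureTheory Matrix

/-- The product measurable-space structure on matrices. -/
instance matrixMeasurableSpace {m n α : Type*} [MeasurableSpace α] :
    MeasurableSpace (Matrix m n α) :=
  inferInstanceAs (MeasurableSpace (m → n → α))

noncomputable section

/-- The Euclidean norm of a real vector. -/
def euclNorm {ι : Type*} [Fintype ι] (x : ι → ℝ) : ℝ :=
  Real.sqrt (∑ i, x i ^ 2)

/-- The Euclidean norm of an integer vector. -/
def intNorm {ι : Type*} [Fintype ι] (a : ι → ℤ) : ℝ :=
  euclNorm (fun i => (a i : ℝ))

/-- The real representation `[[Re M, -Im M],[Im M, Re M]]` of a complex matrix. -/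
def realRep {n : ℕ} (M : Matrix (Fin n) (Fin n) ℂ) :
    Matrix (Fin n ⊕ Fin n) (Fin n ⊕ Fin n) ℝ :=
  Matrix.fromBlocks (M.map Complex.re) (-(M.map Complex.im))
    (M.map Complex.im) (M.map Complex.re)

/-- The set of points of the lattice generated by the columns of `G`. -/
def latticePts {ι : Type*} [Fintype ι] (G : Matrix ι ι ℝ) : Set (ι → ℝ) :=
  {x | ∃ a : ι → ℤ, x = G *ᵥ fun i => (a i : ℝ)}

/-- The `k`-th successive minimum of the lattice generated by the columns of `G`:
the infimum of the radii `r > 0` such that the lattice points of norm at most `r`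
span a subspace of dimension at least `k`. -/
def succMin {ι : Type*} [Fintype ι] (G : Matrix ι ι ℝ) (k : ℕ) : ℝ :=
  sInf {r : ℝ | 0 < r ∧
    k ≤ Module.finrank ℝ (Submodule.span ℝ {x | x ∈ latticePts G ∧ euclNorm x ≤ r})}

/-- The achievable rate of integer forcing,
`R_IF(D,V) = N_t · log₂ (1/λ_{2N_t}(Λ)²)`, where `Λ` is the lattice generated by
the columns of `D^{-1/2} Vᵀ` and `D = diag d`. -/
def RIF (Nt : ℕ) (d : Fin Nt ⊕ Fin Nt → ℝ)
    (V : Matrix (Fin Nt ⊕ Fin Nt) (Fin Nt ⊕ Fin Nt) ℝ) : ℝ :=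
  Nt * Real.logb 2
    (1 / (succMin (Matrix.diagonal (fun i => (Real.sqrt (d i))⁻¹) * Vᵀ) (2 * Nt)) ^ 2)

/-- `α_{N_t} = ((2N_t+3)/4)·((2/π)·Γ(2+N_t)^{1/N_t})²`. -/
def alphaNt (Nt : ℕ) : ℝ :=
  ((2 * Nt + 3) / 4) * ((2 / Real.pi) * (Real.Gamma (2 + Nt)) ^ ((1 : ℝ) / Nt)) ^ 2

/-- `A(β,d;ι) = {a ∈ ℤ^ι : 0 < ‖a‖ < √(β/d)}`. -/
def Aset (ι : Type*) [Fintype ι] (β dm : ℝ) : Set (ι → ℤ) :=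
  {a | 0 < intNorm a ∧ intNorm a < Real.sqrt (β / dm)}

/-! ### Auxiliary lemmas -/

lemma realRep_mul {n : ℕ} (M N : Matrix (Fin n) (Fin n) ℂ) :
    realRep (M * N) = realRep M * realRep N := by
  ext i j
  cases i <;> cases j <;>
    simp [realRep, Matrix.mul_apply, Fintype.sum_sum_type, Complex.mul_re, Complex.mul_im,
      Finset.sum_add_distrib, Finset.sum_sub_distrib] <;> ring

lemma realRep_one {n : ℕ} : realRep (1 : Matrix (Fin n) (Fin n) ℂ) = 1 := by
  ext i j
  cases i <;> cases j <;>
    simp [realRep, Matrix.one_apply] <;> split <;> simp_all [Matrix.one_apply]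

lemma realRep_star {n : ℕ} (M : Matrix (Fin n) (Fin n) ℂ) :
    star (realRep M) = realRep (star M) := by
  ext i j
  cases i <;> cases j <;>
    simp [realRep, Matrix.conjTranspose_apply]

/-- The complex vector associated to a real vector of even dimension. -/
def cvec {n : ℕ} (x : Fin n ⊕ Fin n → ℝ) : Fin n → ℂ :=
  fun j => ⟨x (Sum.inl j), x (Sum.inr j)⟩

lemma realRep_mulVec {n : ℕ} (M : Matrix (Fin n) (Fin n) ℂ) (x : Fin n ⊕ Fin n → ℝ) :
    realRep M *ᵥ x =
      Sum.elim (fun i => ((M *ᵥ cvec x) i).re) (fun i => ((M *ᵥ cvec x) i).im) := by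
  funext i
  cases i <;>
    simp [realRep, Matrix.mulVec, dotProduct, Fintype.sum_sum_type, cvec,
      Complex.mul_re, Complex.mul_im, Finset.sum_add_distrib, Finset.sum_sub_distrib,
      sub_eq_add_neg]
  ring

lemma sq_euclNorm {ι : Type*} [Fintype ι] (x : ι → ℝ) : euclNorm x ^ 2 = ∑ i, x i ^ 2 := by
  rw [euclNorm, Real.sq_sqrt]
  exact Finset.sum_nonneg fun i _ => sq_nonneg _

lemma sum_normSq_cvec {n : ℕ} (x : Fin n ⊕ Fin n → ℝ) :
    ∑ j, Complex.normSq (cvec x j) = ∑ i, x i ^ 2 := by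
  simp [Fintype.sum_sum_type, cvec, Complex.normSq_apply, Finset.sum_add_distrib, sq]

lemma euclNorm_mulVec_orth {ι : Type*} [Fintype ι] [DecidableEq ι]
    (O : Matrix ι ι ℝ) (hO : O ∈ Matrix.unitaryGroup ι ℝ) (x : ι → ℝ) :
    euclNorm (O *ᵥ x) = euclNorm x := by
  unfold euclNorm
  congr 1
  have h1 : star O * O = 1 := (Matrix.mem_unitaryGroup_iff').mp hO
  have : (O *ᵥ x) ⬝ᵥ (O *ᵥ x) = x ⬝ᵥ x := by
    rw [Matrix.dotProduct_mulVec, ← Matrix.mulVec_transpose, Matrix.mulVec_mulVec]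
    have : Oᵀ = star O := by
      ext i j; simp [Matrix.conjTranspose_apply]
    rw [this, h1, Matrix.one_mulVec]
  simpa [dotProduct, sq] using this

lemma exists_unitary_mulVec {n : ℕ} (hn : 1 ≤ n) (x y : Fin n → ℂ)
    (h : ∑ j, Complex.normSq (x j) = ∑ j, Complex.normSq (y j)) :
    ∃ R : Matrix.unitaryGroup (Fin n) ℂ, (R : Matrix (Fin n) (Fin n) ℂ) *ᵥ x = y := by
  classical
  set E := EuclideanSpace ℂ (Fin n)
  let x' : E := (WithLp.equiv 2 (Fin n → ℂ)).symm x
  let y' : E := (WithLp.equiv 2 (Fin n → ℂ)).symm y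
  have hxnorm : ‖x'‖ = Real.sqrt (∑ j, Complex.normSq (x j)) := by
    rw [EuclideanSpace.norm_eq]
    congr 1
    refine Finset.sum_congr rfl fun j _ => ?_
    rw [Complex.sq_norm]
    rfl
  have hynorm : ‖y'‖ = Real.sqrt (∑ j, Complex.normSq (y j)) := by
    rw [EuclideanSpace.norm_eq]
    congr 1
    refine Finset.sum_congr rfl fun j _ => ?_
    rw [Complex.sq_norm]
    rfl
  have hnorm : ‖x'‖ = ‖y'‖ := by rw [hxnorm, hynorm, h]
  by_cases hx0 : x' = 0
  · have hy0 : y' = 0 := by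
      have : ‖y'‖ = 0 := by rw [← hnorm, hx0, norm_zero]
      exact norm_eq_zero.mp this
    refine ⟨1, ?_⟩
    have hx : x = 0 := congrArg (WithLp.equiv 2 (Fin n → ℂ)) hx0
    have hy : y = 0 := congrArg (WithLp.equiv 2 (Fin n → ℂ)) hy0
    simp [Matrix.one_mulVec, hx, hy]
  · have hy0 : y' ≠ 0 := fun hy => hx0 (norm_eq_zero.mp (hnorm.trans (by rw [hy, norm_zero])))
    have hxn : ‖x'‖ ≠ 0 := norm_ne_zero_iff.mpr hx0
    have hyn : ‖y'‖ ≠ 0 := norm_ne_zero_iff.mpr hy0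
    let i0 : Fin n := ⟨0, hn⟩
    have card_eq : Module.finrank ℂ E = Fintype.card (Fin n) := by
      simp [E, finrank_euclideanSpace]
    have hortho : ∀ (v : E), ‖v‖ = 1 →
        Orthonormal ℂ (({i0} : Set (Fin n)).restrict (fun _ : Fin n => v)) := by
      intro v hv
      constructor
      · intro i; exact hv
      · intro i j hij
        exact absurd (Subtype.ext (i.2.trans j.2.symm)) hij
    obtain ⟨b, hb⟩ := Orthonormal.exists_orthonormalBasis_extension_of_card_eq card_eq
      (hortho (‖x'‖⁻¹ • x') (by rw [norm_smul]; simp [hxn, abs_of_nonneg (norm_nonneg x')]))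
    obtain ⟨c, hc⟩ := Orthonormal.exists_orthonormalBasis_extension_of_card_eq card_eq
      (hortho (‖y'‖⁻¹ • y') (by rw [norm_smul]; simp [hyn, abs_of_nonneg (norm_nonneg y')]))
    have hbi0 : b i0 = ‖x'‖⁻¹ • x' := hb i0 rfl
    have hci0 : c i0 = ‖y'‖⁻¹ • y' := hc i0 rfl
    let B : Matrix (Fin n) (Fin n) ℂ := fun i j => (WithLp.equiv 2 (Fin n → ℂ)) (b j) i
    let C : Matrix (Fin n) (Fin n) ℂ := fun i j => (WithLp.equiv 2 (Fin n → ℂ)) (c j) i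
    have hUB : B ∈ Matrix.unitaryGroup (Fin n) ℂ := by
      rw [Matrix.mem_unitaryGroup_iff']
      ext i j
      have := (orthonormal_iff_ite.mp b.orthonormal) i j
      rw [PiLp.inner_apply] at this
      rw [Matrix.mul_apply, Matrix.one_apply]
      simp only [Matrix.star_apply]
      simpa [Matrix.mul_apply, Matrix.star_apply, Matrix.conjTranspose_apply, Matrix.one_apply, B,
        mul_comm] using this
    have hUC : C ∈ Matrix.unitaryGroup (Fin n) ℂ := by
      rw [Matrix.mem_unitaryGroup_iff']
      ext i j
      have := (orthonormal_iff_ite.mp c.orthonormal) i j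
      rw [PiLp.inner_apply] at this
      rw [Matrix.mul_apply, Matrix.one_apply]
      simp only [Matrix.star_apply]
      simpa [Matrix.mul_apply, Matrix.star_apply, Matrix.conjTranspose_apply, Matrix.one_apply, C,
        mul_comm] using this
    let δ : Fin n → ℂ := fun j => if j = i0 then (‖x'‖ : ℂ) else 0
    have hBδ : B *ᵥ δ = x := by
      funext i
      simp only [Matrix.mulVec, dotProduct, δ, mul_ite, mul_zero]
      rw [Finset.sum_ite_eq' Finset.univ i0 (fun j => B i j * (‖x'‖ : ℂ))]
      simp only [Finset.mem_univ, if_true, B, hbi0]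
      have : (WithLp.equiv 2 (Fin n → ℂ)) (‖x'‖⁻¹ • x') i = (‖x'‖ : ℂ)⁻¹ * x i := by
        simp [x']
        norm_cast
      rw [this]
      have hne : (‖x'‖ : ℂ) ≠ 0 := by exact_mod_cast hxn
      rw [mul_comm, ← mul_assoc, mul_inv_cancel₀ hne, one_mul]
    have hCδ : C *ᵥ δ = y := by
      funext i
      simp only [Matrix.mulVec, dotProduct, δ, mul_ite, mul_zero]
      rw [Finset.sum_ite_eq' Finset.univ i0 (fun j => C i j * (‖x'‖ : ℂ))]
      simp only [Finset.mem_univ, if_true, C, hci0]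
      have : (WithLp.equiv 2 (Fin n → ℂ)) (‖y'‖⁻¹ • y') i = (‖y'‖ : ℂ)⁻¹ * y i := by
        simp [y']
        norm_cast
      rw [this, hnorm]
      have hne : (‖y'‖ : ℂ) ≠ 0 := by exact_mod_cast hyn
      rw [mul_comm, ← mul_assoc, mul_inv_cancel₀ hne, one_mul]
    refine ⟨⟨C, hUC⟩ * star ⟨B, hUB⟩, ?_⟩
    have hcoe : ((⟨C, hUC⟩ * star ⟨B, hUB⟩ : Matrix.unitaryGroup (Fin n) ℂ) :
        Matrix (Fin n) (Fin n) ℂ) = C * Bᴴ := rfl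
    have hB1 : Bᴴ * B = 1 := (Matrix.mem_unitaryGroup_iff').mp hUB
    have hinner : Bᴴ *ᵥ (B *ᵥ δ) = δ := by
      rw [Matrix.mulVec_mulVec, hB1, Matrix.one_mulVec]
    rw [hcoe, ← hBδ, ← Matrix.mulVec_mulVec, hinner, hCδ]

lemma exists_unitary_real {n : ℕ} (hn : 1 ≤ n) (p q : Fin n ⊕ Fin n → ℝ)
    (h : euclNorm p = euclNorm q) :
    ∃ R : Matrix.unitaryGroup (Fin n) ℂ,
      realRep (R : Matrix (Fin n) (Fin n) ℂ) *ᵥ p = q := by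
  have hsum : ∑ j, Complex.normSq (cvec p j) = ∑ j, Complex.normSq (cvec q j) := by
    rw [sum_normSq_cvec, sum_normSq_cvec, ← sq_euclNorm, ← sq_euclNorm, h]
  obtain ⟨R, hR⟩ := exists_unitary_mulVec hn (cvec p) (cvec q) hsum
  refine ⟨R, ?_⟩
  rw [realRep_mulVec, hR]
  funext i
  cases i <;> rfl

/-! ### Measurability lemmas -/

lemma measurable_mulVec_const {ι : Type*} [Fintype ι] (c : ι → ℝ) :
    Measurable fun M : Matrix ι ι ℝ => M *ᵥ c := by
  apply measurable_pi_lambda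
  intro i
  have hentry : ∀ j : ι, Measurable fun M : Matrix ι ι ℝ => M i j :=
    fun j => (measurable_pi_apply j).comp (measurable_pi_apply i)
  exact Finset.measurable_sum _ fun j _ => (hentry j).mul_const (c j)

lemma measurable_realRep {n : ℕ} :
    Measurable fun M : Matrix (Fin n) (Fin n) ℂ => realRep M := by
  apply measurable_pi_lambda
  intro i
  apply measurable_pi_lambda
  intro j
  have hentry : ∀ k l : Fin n, Measurable fun M : Matrix (Fin n) (Fin n) ℂ => M k l :=
    fun k l => (measurable_pi_apply l).comp (measurable_pi_apply k)
  cases i with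
  | inl i =>
    cases j with
    | inl j => simpa [realRep, Function.comp_def] using Complex.measurable_re.comp (hentry i j)
    | inr j => simpa [realRep, Function.comp_def] using Complex.measurable_im.comp (hentry i j)
  | inr i =>
    cases j with
    | inl j => simpa [realRep, Function.comp_def] using Complex.measurable_im.comp (hentry i j)
    | inr j => simpa [realRep, Function.comp_def] using Complex.measurable_re.comp (hentry i j)

lemma measurable_mulVec_pair {ι : Type*} [Fintype ι] :
    Measurable fun p : Matrix ι ι ℝ × (ι → ℝ) => p.1 *ᵥ p.2 := by
  apply measurable_pi_lambda
  intro i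
  have hm : Measurable fun p : Matrix ι ι ℝ × (ι → ℝ) => p.1 := measurable_fst
  have hentry : ∀ j : ι, Measurable fun p : Matrix ι ι ℝ × (ι → ℝ) => p.1 i j :=
    fun j => (measurable_pi_apply j).comp ((measurable_pi_apply i).comp hm)
  have hvec : ∀ j : ι, Measurable fun p : Matrix ι ι ℝ × (ι → ℝ) => p.2 j :=
    fun j => (measurable_pi_apply j).comp measurable_snd
  exact Finset.measurable_sum _ fun j _ => (hentry j).mul (hvec j)

lemma measurable_matmul_left {ι : Type*} {α : Type*} [Fintype ι]
    [NonUnitalNonAssocSemiring α] [MeasurableSpace α] [MeasurableMul₂ α] [MeasurableAdd₂ α]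
    (A : Matrix ι ι α) : Measurable fun M : Matrix ι ι α => A * M := by
  apply measurable_pi_lambda
  intro i
  apply measurable_pi_lambda
  intro j
  simp only [Matrix.mul_apply]
  have hentry : ∀ k : ι, Measurable fun M : Matrix ι ι α => M k j :=
    fun k => (measurable_pi_apply j).comp (measurable_pi_apply k)
  exact Finset.measurable_sum _ fun k _ => measurable_const.mul (hentry k)

lemma measurable_matmul_right {ι : Type*} {α : Type*} [Fintype ι]
    [NonUnitalNonAssocSemiring α] [MeasurableSpace α] [MeasurableMul₂ α] [MeasurableAdd₂ α]
    (A : Matrix ι ι α) : Measurable fun M : Matrix ι ι α => M * A := by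
  apply measurable_pi_lambda
  intro i
  apply measurable_pi_lambda
  intro j
  simp only [Matrix.mul_apply]
  have hentry : ∀ k : ι, Measurable fun M : Matrix ι ι α => M i k :=
    fun k => (measurable_pi_apply k).comp (measurable_pi_apply i)
  exact Finset.measurable_sum _ fun k _ => (hentry k).mul measurable_const

/-! ### Fubini lemmas -/

lemma map_prod_of_left {α β γ : Type*} [MeasurableSpace α] [MeasurableSpace β]
    [MeasurableSpace γ] (μ : Measure α) (ν : Measure β)
    [IsProbabilityMeasure μ] [IsProbabilityMeasure ν]
    {F : α × β → γ} (hF : Measurable F) (κ : Measure γ)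
    (h : ∀ y : β, Measure.map (fun x => F (x, y)) μ = κ) :
    Measure.map F (μ.prod ν) = κ := by
  ext s hs
  rw [Measure.map_apply hF hs, Measure.prod_apply_symm (hF hs)]
  have heq : ∀ y : β, μ ((fun x => (x, y)) ⁻¹' (F ⁻¹' s)) = κ s := by
    intro y
    have hm : Measurable fun x => F (x, y) := hF.comp (measurable_id.prodMk measurable_const)
    rw [show (fun x => (x, y)) ⁻¹' (F ⁻¹' s) = (fun x => F (x, y)) ⁻¹' s from rfl,
      ← Measure.map_apply hm hs, h y]
  simp only [heq]
  simp

lemma map_prod_of_right {α β γ : Type*} [MeasurableSpace α] [MeasurableSpace β]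
    [MeasurableSpace γ] (μ : Measure α) (ν : Measure β)
    [IsProbabilityMeasure μ] [IsProbabilityMeasure ν]
    {F : α × β → γ} (hF : Measurable F) (κ : Measure γ)
    (h : ∀ x : α, Measure.map (fun y => F (x, y)) ν = κ) :
    Measure.map F (μ.prod ν) = κ := by
  ext s hs
  rw [Measure.map_apply hF hs, Measure.prod_apply (hF hs)]
  have heq : ∀ x : α, ν (Prod.mk x ⁻¹' (F ⁻¹' s)) = κ s := by
    intro x
    have hm : Measurable fun y => F (x, y) := hF.comp (measurable_const.prodMk measurable_id)
    rw [show Prod.mk x ⁻¹' (F ⁻¹' s) = (fun y => F (x, y)) ⁻¹' s from rfl,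
      ← Measure.map_apply hm hs, h x]
  simp only [heq]
  simp

/-! ### Main theorem -/

theorem statement_0 (Nt : ℕ) (hNt : 1 ≤ Nt)
    (d : Fin Nt ⊕ Fin Nt → ℝ) (hd : ∀ i, 0 < d i)
    (a : Fin Nt ⊕ Fin Nt → ℤ)
    (μU : Measure (Matrix.unitaryGroup (Fin Nt) ℂ)) [IsProbabilityMeasure μU]
    [μU.IsMulLeftInvariant] [μU.IsMulRightInvariant]
    (μO : Measure (Matrix.orthogonalGroup (Fin Nt ⊕ Fin Nt) ℝ)) [IsProbabilityMeasure μO]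
    [μO.IsMulLeftInvariant] [μO.IsMulRightInvariant] :
    Measure.map
      (fun Vc : Matrix.unitaryGroup (Fin Nt) ℂ =>
        euclNorm (fun i => Real.sqrt (d i) *
          ((realRep (Vc : Matrix (Fin Nt) (Fin Nt) ℂ)) *ᵥ fun j => ((a j : ℝ))) i)) μU
    = Measure.map
      (fun O : Matrix.orthogonalGroup (Fin Nt ⊕ Fin Nt) ℝ =>
        euclNorm (fun i => Real.sqrt (d i) *
          ((O : Matrix (Fin Nt ⊕ Fin Nt) (Fin Nt ⊕ Fin Nt) ℝ) *ᵥ fun j => ((a j : ℝ))) i)) μO := by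
  classical
  set aR : Fin Nt ⊕ Fin Nt → ℝ := fun j => (a j : ℝ) with haR
  set g : (Fin Nt ⊕ Fin Nt → ℝ) → ℝ := fun x => euclNorm (fun i => Real.sqrt (d i) * x i)
    with hgdef
  have hgm : Measurable g := by
    apply Measurable.comp Real.continuous_sqrt.measurable
    exact Finset.measurable_sum _ fun i _ =>
      (((measurable_pi_apply i).const_mul _).pow_const 2)
  set fU : Matrix.unitaryGroup (Fin Nt) ℂ → (Fin Nt ⊕ Fin Nt → ℝ) :=
    fun Vc => realRep (Vc : Matrix (Fin Nt) (Fin Nt) ℂ) *ᵥ aR with hfUdef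
  set fO : Matrix.orthogonalGroup (Fin Nt ⊕ Fin Nt) ℝ → (Fin Nt ⊕ Fin Nt → ℝ) :=
    fun O => (O : Matrix (Fin Nt ⊕ Fin Nt) (Fin Nt ⊕ Fin Nt) ℝ) *ᵥ aR with hfOdef
  have hfU : Measurable fU :=
    (measurable_mulVec_const aR).comp (measurable_realRep.comp measurable_subtype_coe)
  have hfO : Measurable fO :=
    (measurable_mulVec_const aR).comp measurable_subtype_coe
  have key : Measure.map fU μU = Measure.map fO μO := by
    set F : (Matrix.orthogonalGroup (Fin Nt ⊕ Fin Nt) ℝ × Matrix.unitaryGroup (Fin Nt) ℂ) →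
        (Fin Nt ⊕ Fin Nt → ℝ) :=
      fun p => realRep (p.2 : Matrix (Fin Nt) (Fin Nt) ℂ) *ᵥ
        ((p.1 : Matrix (Fin Nt ⊕ Fin Nt) (Fin Nt ⊕ Fin Nt) ℝ) *ᵥ aR) with hFdef
    have hFm : Measurable F := by
      have : F = (fun q : Matrix (Fin Nt ⊕ Fin Nt) (Fin Nt ⊕ Fin Nt) ℝ ×
          (Fin Nt ⊕ Fin Nt → ℝ) => q.1 *ᵥ q.2) ∘
          (fun p => (realRep (p.2 : Matrix (Fin Nt) (Fin Nt) ℂ),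
            (p.1 : Matrix (Fin Nt ⊕ Fin Nt) (Fin Nt ⊕ Fin Nt) ℝ) *ᵥ aR)) := rfl
      rw [this]
      exact measurable_mulVec_pair.comp
        (((measurable_realRep.comp measurable_subtype_coe).comp measurable_snd).prodMk
          (((measurable_mulVec_const aR).comp measurable_subtype_coe).comp measurable_fst))
    have h1 : Measure.map F (μO.prod μU) = Measure.map fO μO := by
      apply map_prod_of_left μO μU hFm
      intro u
      have hQmem : realRep (u : Matrix (Fin Nt) (Fin Nt) ℂ) ∈
          Matrix.orthogonalGroup (Fin Nt ⊕ Fin Nt) ℝ := by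
        rw [Matrix.mem_unitaryGroup_iff]
        rw [realRep_star, ← realRep_mul]
        rw [(Unitary.mem_iff.mp u.2).2, realRep_one]
      set Q : Matrix.orthogonalGroup (Fin Nt ⊕ Fin Nt) ℝ := ⟨_, hQmem⟩ with hQdef
      have hcomp : (fun o : Matrix.orthogonalGroup (Fin Nt ⊕ Fin Nt) ℝ => F (o, u)) =
          fO ∘ (fun o => Q * o) := by
        funext o
        show realRep (u : Matrix (Fin Nt) (Fin Nt) ℂ) *ᵥ ((o : Matrix _ _ ℝ) *ᵥ aR) =
          ((Q * o : Matrix.orthogonalGroup (Fin Nt ⊕ Fin Nt) ℝ) : Matrix _ _ ℝ) *ᵥ aR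
        rw [Matrix.mulVec_mulVec]
        rfl
      have hmulQ : Measurable fun o : Matrix.orthogonalGroup (Fin Nt ⊕ Fin Nt) ℝ => Q * o := by
        apply Measurable.subtype_mk
        exact (measurable_matmul_left ((Q : Matrix.orthogonalGroup (Fin Nt ⊕ Fin Nt) ℝ) : Matrix (Fin Nt ⊕ Fin Nt) (Fin Nt ⊕ Fin Nt) ℝ)).comp measurable_subtype_coe
      rw [hcomp, ← Measure.map_map hfO hmulQ, MeasureTheory.map_mul_left_eq_self μO Q]
    have h2 : Measure.map F (μO.prod μU) = Measure.map fU μU := by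
      apply map_prod_of_right μO μU hFm
      intro o
      have hnormb : euclNorm aR =
          euclNorm ((o : Matrix (Fin Nt ⊕ Fin Nt) (Fin Nt ⊕ Fin Nt) ℝ) *ᵥ aR) :=
        (euclNorm_mulVec_orth _ o.2 aR).symm
      obtain ⟨R, hR⟩ := exists_unitary_real hNt aR _ hnormb
      have hcomp : (fun u : Matrix.unitaryGroup (Fin Nt) ℂ => F (o, u)) =
          fU ∘ (fun u => u * R) := by
        funext u
        show realRep (u : Matrix (Fin Nt) (Fin Nt) ℂ) *ᵥ ((o : Matrix _ _ ℝ) *ᵥ aR) =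
          realRep ((u * R : Matrix.unitaryGroup (Fin Nt) ℂ) : Matrix (Fin Nt) (Fin Nt) ℂ) *ᵥ aR
        rw [← hR, Matrix.mulVec_mulVec, ← realRep_mul]
        rfl
      have hmulR : Measurable fun u : Matrix.unitaryGroup (Fin Nt) ℂ => u * R := by
        apply Measurable.subtype_mk
        exact (measurable_matmul_right ((R : Matrix.unitaryGroup (Fin Nt) ℂ) : Matrix (Fin Nt) (Fin Nt) ℂ)).comp measurable_subtype_coe
      rw [hcomp, ← Measure.map_map hfU hmulR, MeasureTheory.map_mul_right_eq_self μU R]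
    rw [← h2, h1]
  have e1 : (fun Vc : Matrix.unitaryGroup (Fin Nt) ℂ =>
      euclNorm (fun i => Real.sqrt (d i) *
        ((realRep (Vc : Matrix (Fin Nt) (Fin Nt) ℂ)) *ᵥ fun j => ((a j : ℝ))) i)) = g ∘ fU := rfl
  have e2 : (fun O : Matrix.orthogonalGroup (Fin Nt ⊕ Fin Nt) ℝ =>
      euclNorm (fun i => Real.sqrt (d i) *
        ((O : Matrix (Fin Nt ⊕ Fin Nt) (Fin Nt ⊕ Fin Nt) ℝ) *ᵥ fun j => ((a j : ℝ))) i))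
      = g ∘ fO := rfl
  rw [e1, e2, ← Measure.map_map hgm hfU, ← Measure.map_map hgm hfO, key]

end
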